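/- arXiv:1409.4377 — 2 statements merged into one kernel-verified Lean document; each statement's English description precedes it below -/
import Mathlib

section
/- Price's theorem, first identity: if X is an ℝⁿ-valued Gaussian random vector with mean μ and positive definite covariance Σ, and f: ℝⁿ → ℝ is continuously differentiable with f and its gradient satisfying p_{μ,Σ}(x)·|∂_x f(x)| = o(e^{−ε|x|²}) as x → ∞ for some ε > 0 (so all integrals converge and differentiation under the integral is valid), then the gradient with respect to μ of g(μ,Σ) := E[f(X)] equals E[∂_x f(X)]. -/
open Matrix MeasureTheory Filter Asymptotics

noncomputable def gaussianDensity {n : ℕ} (μ : Fin n → ℝ) (S : Matrix (Fin n) (Fin n) ℝ)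
    (x : Fin n → ℝ) : ℝ :=
  (2 * Real.pi) ^ (-(n : ℝ) / 2) * S.det ^ (-(1 : ℝ) / 2) *
    Real.exp (-(1 / 2 : ℝ) * ((x - μ) ⬝ᵥ (S⁻¹ *ᵥ (x - μ))))

namespace PriceAux

variable {n : ℕ}

lemma continuous_quad (A : Matrix (Fin n) (Fin n) ℝ) :
    Continuous fun v : Fin n → ℝ => v ⬝ᵥ (A *ᵥ v) := by
  have : (fun v : Fin n → ℝ => v ⬝ᵥ (A *ᵥ v))
      = fun v => ∑ i, v i * ∑ j, A i j * v j := by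
    funext v; simp [dotProduct, mulVec]
  rw [this]
  exact continuous_finset_sum _ fun i _ =>
    (continuous_apply i).mul <| continuous_finset_sum _ fun j _ =>
      continuous_const.mul (continuous_apply j)

lemma quad_abs_le (A : Matrix (Fin n) (Fin n) ℝ) :
    ∃ a : ℝ, 0 ≤ a ∧ ∀ v w : Fin n → ℝ, |v ⬝ᵥ (A *ᵥ w)| ≤ a * (‖v‖ * ‖w‖) := by
  refine ⟨∑ i, ∑ j, |A i j|,
    Finset.sum_nonneg fun i _ => Finset.sum_nonneg fun j _ => abs_nonneg _, fun v w => ?_⟩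
  have hAw : ∀ i, |(A *ᵥ w) i| ≤ (∑ j, |A i j|) * ‖w‖ := by
    intro i
    calc |(A *ᵥ w) i| = |∑ j, A i j * w j| := by simp [mulVec, dotProduct]
      _ ≤ ∑ j, |A i j * w j| := Finset.abs_sum_le_sum_abs _ _
      _ ≤ ∑ j, |A i j| * ‖w‖ := by
          refine Finset.sum_le_sum fun j _ => ?_
          rw [abs_mul]
          exact mul_le_mul_of_nonneg_left
            (by simpa [Real.norm_eq_abs] using norm_le_pi_norm w j) (abs_nonneg _)
      _ = (∑ j, |A i j|) * ‖w‖ := by rw [Finset.sum_mul]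
  calc |v ⬝ᵥ (A *ᵥ w)| ≤ ∑ i, |v i * (A *ᵥ w) i| := Finset.abs_sum_le_sum_abs _ _
    _ ≤ ∑ i, (∑ j, |A i j|) * (‖v‖ * ‖w‖) := by
        refine Finset.sum_le_sum fun i _ => ?_
        rw [abs_mul]
        have h1 : |v i| ≤ ‖v‖ := by simpa [Real.norm_eq_abs] using norm_le_pi_norm v i
        calc |v i| * |(A *ᵥ w) i| ≤ ‖v‖ * ((∑ j, |A i j|) * ‖w‖) :=
              mul_le_mul h1 (hAw i) (abs_nonneg _) (norm_nonneg _)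
          _ = (∑ j, |A i j|) * (‖v‖ * ‖w‖) := by ring
    _ = (∑ i, ∑ j, |A i j|) * (‖v‖ * ‖w‖) := by rw [Finset.sum_mul]

lemma coercive {A : Matrix (Fin n) (Fin n) ℝ} (hA : A.PosDef) :
    ∃ lam : ℝ, 0 < lam ∧ ∀ v : Fin n → ℝ, lam * ‖v‖ ^ 2 ≤ v ⬝ᵥ (A *ᵥ v) := by
  rcases Nat.eq_zero_or_pos n with hn | hn
  · subst hn
    refine ⟨1, one_pos, fun v => ?_⟩
    have hv : v = 0 := Subsingleton.elim _ _
    have hq : v ⬝ᵥ (A *ᵥ v) = 0 := by simp [hv, dotProduct]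
    have h0 : ‖v‖ = 0 := by rw [hv]; exact norm_zero
    rw [hq, h0]; norm_num
  · haveI : Nonempty (Fin n) := ⟨⟨0, hn⟩⟩
    have hsc : IsCompact (Metric.sphere (0 : Fin n → ℝ) 1) := isCompact_sphere _ _
    have hne : (Metric.sphere (0 : Fin n → ℝ) 1).Nonempty :=
      NormedSpace.sphere_nonempty.2 zero_le_one
    obtain ⟨v₀, hv₀s, hmin⟩ := hsc.exists_isMinOn hne (continuous_quad A).continuousOn
    have hv₀norm : ‖v₀‖ = 1 := by simpa using hv₀s
    have hv₀ : v₀ ≠ 0 := by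
      intro h; rw [h, norm_zero] at hv₀norm; exact one_ne_zero hv₀norm.symm
    have hlam : 0 < v₀ ⬝ᵥ (A *ᵥ v₀) := by
      have := hA.dotProduct_mulVec_pos hv₀
      simpa using this
    refine ⟨v₀ ⬝ᵥ (A *ᵥ v₀), hlam, fun v => ?_⟩
    rcases eq_or_ne v 0 with rfl | hv
    · simp
    · have hnv : 0 < ‖v‖ := norm_pos_iff.2 hv
      set u := ‖v‖⁻¹ • v with hu_def
      have hu : u ∈ Metric.sphere (0 : Fin n → ℝ) 1 := by
        simp [hu_def, norm_smul, abs_of_pos (inv_pos.2 hnv), inv_mul_cancel₀ hnv.ne']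
      have h1 : v₀ ⬝ᵥ (A *ᵥ v₀) ≤ u ⬝ᵥ (A *ᵥ u) := hmin hu
      have h2 : u ⬝ᵥ (A *ᵥ u) = ‖v‖⁻¹ * ‖v‖⁻¹ * (v ⬝ᵥ (A *ᵥ v)) := by
        simp [hu_def, smul_dotProduct, mulVec_smul, dotProduct_smul, smul_eq_mul]
        ring
      have h3 : (v₀ ⬝ᵥ (A *ᵥ v₀)) * ‖v‖ ^ 2 ≤ (u ⬝ᵥ (A *ᵥ u)) * ‖v‖ ^ 2 :=
        mul_le_mul_of_nonneg_right h1 (sq_nonneg _)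
      have hninv : ‖v‖⁻¹ * ‖v‖ = 1 := inv_mul_cancel₀ hnv.ne'
      have h4 : (‖v‖⁻¹ * ‖v‖⁻¹ * (v ⬝ᵥ (A *ᵥ v))) * ‖v‖ ^ 2 = v ⬝ᵥ (A *ᵥ v) := by
        calc (‖v‖⁻¹ * ‖v‖⁻¹ * (v ⬝ᵥ (A *ᵥ v))) * ‖v‖ ^ 2
            = (v ⬝ᵥ (A *ᵥ v)) * (‖v‖⁻¹ * ‖v‖) ^ 2 := by ring
          _ = v ⬝ᵥ (A *ᵥ v) := by rw [hninv]; ring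
      rw [h2, h4] at h3
      linarith

lemma symm_dot {A : Matrix (Fin n) (Fin n) ℝ} (hA : A.IsHermitian) (v w : Fin n → ℝ) :
    v ⬝ᵥ (A *ᵥ w) = w ⬝ᵥ (A *ᵥ v) := by
  have hAs : ∀ i j, A i j = A j i := by
    intro i j
    conv_lhs => rw [← hA.eq]
    simp [conjTranspose_apply]
  simp only [dotProduct, mulVec, Finset.mul_sum]
  rw [Finset.sum_comm]
  refine Finset.sum_congr rfl fun i _ => ?_
  refine Finset.sum_congr rfl fun j _ => ?_
  rw [hAs j i]; ring

lemma quad_expand {A : Matrix (Fin n) (Fin n) ℝ} (hA : A.IsHermitian) (y d : Fin n → ℝ) :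
    (y + d) ⬝ᵥ (A *ᵥ (y + d))
      = y ⬝ᵥ (A *ᵥ y) + 2 * (d ⬝ᵥ (A *ᵥ y)) + d ⬝ᵥ (A *ᵥ d) := by
  have h := symm_dot hA y d
  simp only [add_dotProduct, mulVec_add, dotProduct_add]
  linarith

lemma integrable_exp_quad (b : ℝ) (hb : 0 < b) (c : ℝ) :
    Integrable fun y : Fin n → ℝ => Real.exp (-b * ‖y‖ ^ 2 + c * ‖y‖) := by
  set b' : ℝ := b / (2 * (n + 1)) with hb'_def
  have hb' : 0 < b' := by positivity
  have hint : Integrable fun y : Fin n → ℝ => ∏ i, Real.exp (-b' * (y i) ^ 2) :=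
    Integrable.fintype_prod fun _ => integrable_exp_neg_mul_sq hb'
  have hcont : Continuous fun y : Fin n → ℝ => Real.exp (-b * ‖y‖ ^ 2 + c * ‖y‖) :=
    Real.continuous_exp.comp
      (((continuous_const.mul (continuous_norm.pow 2)).add
        (continuous_const.mul continuous_norm)))
  refine (hint.const_mul (Real.exp (c ^ 2 / (2 * b)))).mono' hcont.aestronglyMeasurable ?_
  refine Filter.Eventually.of_forall fun y => ?_
  have hprod : ∏ i, Real.exp (-b' * (y i) ^ 2) = Real.exp (∑ i, -b' * (y i) ^ 2) := by
    rw [Real.exp_sum]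
  have hsum : ∑ i, (y i) ^ 2 ≤ (n + 1) * ‖y‖ ^ 2 := by
    have h1 : ∀ i, (y i) ^ 2 ≤ ‖y‖ ^ 2 := by
      intro i
      have h5 : |y i| ≤ ‖y‖ := by
        simpa [Real.norm_eq_abs] using norm_le_pi_norm y i
      calc (y i) ^ 2 = |y i| ^ 2 := (sq_abs _).symm
        _ ≤ ‖y‖ ^ 2 := pow_le_pow_left₀ (abs_nonneg _) h5 2
    calc ∑ i, (y i) ^ 2 ≤ ∑ _i : Fin n, ‖y‖ ^ 2 :=
          Finset.sum_le_sum fun i _ => h1 i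
      _ = n * ‖y‖ ^ 2 := by simp [Finset.sum_const, nsmul_eq_mul]
      _ ≤ (n + 1) * ‖y‖ ^ 2 := by nlinarith [sq_nonneg ‖y‖]
  have hexp : -b * ‖y‖ ^ 2 + c * ‖y‖ ≤ c ^ 2 / (2 * b) + ∑ i, -b' * (y i) ^ 2 := by
    have h2 : ∑ i, -b' * (y i) ^ 2 = -b' * ∑ i, (y i) ^ 2 := by
      rw [Finset.mul_sum]
    rw [h2]
    have h3 : -b' * ∑ i, (y i) ^ 2 ≥ -b' * ((n + 1) * ‖y‖ ^ 2) := by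
      have := mul_le_mul_of_nonneg_left hsum hb'.le
      linarith
    have h4 : b' * ((n:ℝ) + 1) = b / 2 := by
      rw [hb'_def]; field_simp
    have h5 : -b' * ((n + 1) * ‖y‖ ^ 2) = -(b / 2) * ‖y‖ ^ 2 := by
      rw [← h4]; push_cast; ring
    rw [h5] at h3
    have key : c * ‖y‖ - (b / 2) * ‖y‖ ^ 2 ≤ c ^ 2 / (2 * b) := by
      rw [le_div_iff₀ (by positivity : (0:ℝ) < 2 * b)]
      nlinarith [sq_nonneg (b * ‖y‖ - c)]
    calc -b * ‖y‖ ^ 2 + c * ‖y‖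
        = (c * ‖y‖ - (b/2) * ‖y‖ ^ 2) + (-(b/2) * ‖y‖ ^ 2) := by ring
      _ ≤ c ^ 2 / (2 * b) + -b' * ∑ i, (y i) ^ 2 := by push_cast at h3 ⊢; linarith
  calc ‖Real.exp (-b * ‖y‖ ^ 2 + c * ‖y‖)‖
      = Real.exp (-b * ‖y‖ ^ 2 + c * ‖y‖) := by
        rw [Real.norm_eq_abs, abs_of_pos (Real.exp_pos _)]
    _ ≤ Real.exp (c ^ 2 / (2 * b) + ∑ i, -b' * (y i) ^ 2) := Real.exp_le_exp.2 hexp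
    _ = Real.exp (c ^ 2 / (2 * b)) * ∏ i, Real.exp (-b' * (y i) ^ 2) := by
        rw [Real.exp_add, hprod]

lemma decay_bound {g : (Fin n → ℝ) → ℝ} {ε : ℝ}
    (h : g =o[cocompact (Fin n → ℝ)] fun x => Real.exp (-ε * ‖x‖ ^ 2)) :
    ∃ R : ℝ, 0 ≤ R ∧ ∀ x : Fin n → ℝ, R < ‖x‖ → |g x| ≤ Real.exp (-ε * ‖x‖ ^ 2) := by
  have hev := h.def one_pos
  rw [← Metric.cobounded_eq_cocompact] at hev
  rw [(Metric.hasBasis_cobounded_compl_closedBall (0 : Fin n → ℝ)).eventually_iff] at hev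
  obtain ⟨r, -, hr⟩ := hev
  refine ⟨max r 0, le_max_right _ _, fun x hx => ?_⟩
  have hxr : x ∈ (Metric.closedBall (0 : Fin n → ℝ) r)ᶜ := by
    simp only [Set.mem_compl_iff, Metric.mem_closedBall, dist_zero_right, not_le]
    exact lt_of_le_of_lt (le_max_left r 0) hx
  have := hr hxr
  simpa [Real.norm_eq_abs, abs_of_pos (Real.exp_pos _)] using this

end PriceAux

set_option maxHeartbeats 1000000 in
/-- Price's theorem, first identity: the gradient with respect to the mean `μ` of the
generalized moment `g(μ,S) = E[f(X)]` of a Gaussian vector equals `E[∂ₓ f(X)]`. -/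
theorem price_first_identity {n : ℕ} (μ : Fin n → ℝ)
    (S : Matrix (Fin n) (Fin n) ℝ) (hS : S.PosDef)
    (f : (Fin n → ℝ) → ℝ) (hf : ContDiff ℝ 1 f)
    (hdecay : ∃ ε > (0 : ℝ),
      (fun x => gaussianDensity μ S x * |f x|) =o[cocompact (Fin n → ℝ)]
          (fun x => Real.exp (-ε * ‖x‖ ^ 2)) ∧
      (fun x => gaussianDensity μ S x * ‖fderiv ℝ f x‖) =o[cocompact (Fin n → ℝ)]
          (fun x => Real.exp (-ε * ‖x‖ ^ 2))) :
    ∃ L : (Fin n → ℝ) →L[ℝ] ℝ,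
      HasFDerivAt (fun m => ∫ x : Fin n → ℝ, f x * gaussianDensity m S x) L μ ∧
      ∀ h : Fin n → ℝ, L h = ∫ x : Fin n → ℝ, fderiv ℝ f x h * gaussianDensity μ S x := by
  classical
  obtain ⟨ε, hε, h1, h2⟩ := hdecay
  -- Notation
  set A : Matrix (Fin n) (Fin n) ℝ := S⁻¹ with hA_def
  have hA : A.PosDef := hS.inv
  set c₀ : ℝ := (2 * Real.pi) ^ (-(n : ℝ) / 2) * S.det ^ (-(1 : ℝ) / 2) with hc₀_def
  have hc₀ : 0 < c₀ :=
    mul_pos (Real.rpow_pos_of_pos (by positivity) _) (Real.rpow_pos_of_pos hS.det_pos _)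
  have hgd : ∀ m x : Fin n → ℝ,
      gaussianDensity m S x = c₀ * Real.exp (-(1/2 : ℝ) * ((x - m) ⬝ᵥ (A *ᵥ (x - m)))) := by
    intro m x; rfl
  have hgd_pos : ∀ m x : Fin n → ℝ, 0 < gaussianDensity m S x := fun m x => by
    rw [hgd]; positivity
  -- shift identity
  have hshift : ∀ m y : Fin n → ℝ, gaussianDensity m S (y + m) = gaussianDensity 0 S y := by
    intro m y
    simp [gaussianDensity, add_sub_cancel_right, sub_zero]
  have hshift' : ∀ y : Fin n → ℝ, gaussianDensity μ S (y + μ) = gaussianDensity 0 S y :=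
    fun y => hshift μ y
  set φ : (Fin n → ℝ) → ℝ := fun y => gaussianDensity 0 S y with hφ_def
  have hφ_eq : ∀ y, φ y = c₀ * Real.exp (-(1/2 : ℝ) * (y ⬝ᵥ (A *ᵥ y))) := by
    intro y
    show gaussianDensity 0 S y = _
    rw [hgd 0 y, sub_zero]
  have hφ_pos : ∀ y, 0 < φ y := fun y => hgd_pos 0 y
  have hφ_cont : Continuous φ := by
    have : φ = fun y => c₀ * Real.exp (-(1/2 : ℝ) * (y ⬝ᵥ (A *ᵥ y))) := funext hφ_eq
    rw [this]
    exact continuous_const.mul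
      (Real.continuous_exp.comp (continuous_const.mul (PriceAux.continuous_quad A)))
  -- constants
  obtain ⟨a, ha0, ha⟩ := PriceAux.quad_abs_le A
  obtain ⟨lam, hlam, hcoer⟩ := PriceAux.coercive hA
  obtain ⟨R₁, hR₁0, hR₁⟩ := PriceAux.decay_bound h1
  obtain ⟨R₂, hR₂0, hR₂⟩ := PriceAux.decay_bound h2
  set R : ℝ := max R₁ R₂ with hR_def
  have hR0 : 0 ≤ R := le_trans hR₁0 (le_max_left _ _)
  set B : ℝ := ‖μ‖ + 1 with hB_def
  have hB : 0 < B := by positivity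
  -- bounds on compact ball
  have hDfc : Continuous fun x => fderiv ℝ f x := hf.continuous_fderiv one_ne_zero
  obtain ⟨M₂', hM₂'⟩ := (isCompact_closedBall (0 : Fin n → ℝ) R).exists_bound_of_continuousOn
    (hDfc.continuousOn (s := Metric.closedBall 0 R))
  obtain ⟨M₁', hM₁'⟩ := (isCompact_closedBall (0 : Fin n → ℝ) R).exists_bound_of_continuousOn
    (hf.continuous.continuousOn (s := Metric.closedBall 0 R))
  set M₂ : ℝ := max M₂' 0 with hM₂_def
  set M₁ : ℝ := max M₁' 0 with hM₁_def
  have hM₂0 : 0 ≤ M₂ := le_max_right _ _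
  have hM₁0 : 0 ≤ M₁ := le_max_right _ _
  have hM₂ : ∀ x : Fin n → ℝ, ‖x‖ ≤ R → ‖fderiv ℝ f x‖ ≤ M₂ := by
    intro x hx
    have hmem : x ∈ Metric.closedBall (0 : Fin n → ℝ) R := by
      simpa [Metric.mem_closedBall, dist_zero_right] using hx
    exact le_trans (hM₂' x hmem) (le_max_left _ _)
  have hM₁ : ∀ x : Fin n → ℝ, ‖x‖ ≤ R → |f x| ≤ M₁ := by
    intro x hx
    have hmem : x ∈ Metric.closedBall (0 : Fin n → ℝ) R := by
      simpa [Metric.mem_closedBall, dist_zero_right] using hx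
    have h6 := hM₁' x hmem
    rw [Real.norm_eq_abs] at h6
    exact le_trans h6 (le_max_left _ _)
  -- geometric estimates
  have hnorm_sq : ∀ (m y : Fin n → ℝ), ‖m‖ ≤ B →
      -ε * ‖y + m‖ ^ 2 ≤ -ε * ‖y‖ ^ 2 + 2 * ε * B * ‖y‖ := by
    intro m y hm
    have h1' : ‖y‖ ≤ ‖y + m‖ + B := by
      have h3' : ‖y‖ ≤ ‖y + m‖ + ‖m‖ := by
        calc ‖y‖ = ‖(y + m) - m‖ := by rw [add_sub_cancel_right]
          _ ≤ ‖y + m‖ + ‖m‖ := norm_sub_le _ _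
      linarith
    have hy0 : (0:ℝ) ≤ ‖y‖ := norm_nonneg _
    have hym0 : (0:ℝ) ≤ ‖y + m‖ := norm_nonneg _
    have key : ‖y‖ ^ 2 ≤ ‖y + m‖ ^ 2 + 2 * B * ‖y‖ := by
      rcases le_or_gt B ‖y‖ with hc | hc
      · nlinarith
      · nlinarith
    nlinarith [hε.le]
  -- φ estimate
  have hφ_le : ∀ y : Fin n → ℝ, φ y ≤ c₀ * Real.exp (-(lam/2) * ‖y‖ ^ 2 + 0 * ‖y‖) := by
    intro y
    rw [hφ_eq]
    have := hcoer y
    refine mul_le_mul_of_nonneg_left (Real.exp_le_exp.2 ?_) hc₀.le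
    nlinarith
  -- the shifted integrand
  set F : (Fin n → ℝ) → (Fin n → ℝ) → ℝ := fun m y => f (y + m) * φ y with hF_def
  set F' : (Fin n → ℝ) → (Fin n → ℝ) → (Fin n → ℝ) →L[ℝ] ℝ :=
    fun m y => φ y • fderiv ℝ f (y + m) with hF'_def
  -- key ratio estimate: for m with ‖m - μ‖ ≤ 1 and R < ‖y + m‖,
  -- φ y * (gaussianDensity μ S (y+m))⁻¹ ≤ exp(a/2 + a‖y‖)
  have hratio : ∀ (m y : Fin n → ℝ), ‖m - μ‖ ≤ 1 →
      φ y ≤ Real.exp (a/2 + a * ‖y‖) * gaussianDensity μ S (y + m) := by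
    intro m y hd
    set d : Fin n → ℝ := m - μ with hd_def
    have hyd : y + m - μ = y + d := by rw [hd_def]; abel
    rw [hgd μ (y + m), hyd, PriceAux.quad_expand hA.1 y d, hφ_eq]
    have habs1 : |d ⬝ᵥ (A *ᵥ y)| ≤ a * (‖d‖ * ‖y‖) := ha d y
    have habs2 : |d ⬝ᵥ (A *ᵥ d)| ≤ a * (‖d‖ * ‖d‖) := ha d d
    have hd0 : (0:ℝ) ≤ ‖d‖ := norm_nonneg _
    have hy0 : (0:ℝ) ≤ ‖y‖ := norm_nonneg _
    have e1 : d ⬝ᵥ (A *ᵥ y) ≤ a * ‖y‖ := by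
      have hna := le_abs_self (d ⬝ᵥ (A *ᵥ y))
      have h2' : a * (‖d‖ * ‖y‖) ≤ a * ‖y‖ := by
        nlinarith [mul_nonneg (mul_nonneg ha0 hy0) (sub_nonneg.2 hd)]
      linarith [habs1]
    have e2 : d ⬝ᵥ (A *ᵥ d) ≤ a := by
      have hna := le_abs_self (d ⬝ᵥ (A *ᵥ d))
      have hds : ‖d‖ * ‖d‖ ≤ 1 := by nlinarith [hd, hd0]
      have h2' : a * (‖d‖ * ‖d‖) ≤ a := by
        nlinarith [mul_nonneg ha0 (sub_nonneg.2 hds)]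
      linarith [habs2]
    have hexp : Real.exp (-(1/2 : ℝ) * (y ⬝ᵥ (A *ᵥ y)))
        ≤ Real.exp (a/2 + a * ‖y‖) * Real.exp (-(1/2 : ℝ)
            * (y ⬝ᵥ (A *ᵥ y) + 2 * (d ⬝ᵥ (A *ᵥ y)) + d ⬝ᵥ (A *ᵥ d))) := by
      rw [← Real.exp_add]
      refine Real.exp_le_exp.2 ?_
      linarith [e1, e2]
    calc c₀ * Real.exp (-(1/2 : ℝ) * (y ⬝ᵥ (A *ᵥ y)))
        ≤ c₀ * (Real.exp (a/2 + a * ‖y‖) * Real.exp (-(1/2 : ℝ)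
            * (y ⬝ᵥ (A *ᵥ y) + 2 * (d ⬝ᵥ (A *ᵥ y)) + d ⬝ᵥ (A *ᵥ d)))) :=
          mul_le_mul_of_nonneg_left hexp hc₀.le
      _ = Real.exp (a/2 + a * ‖y‖) * (c₀ * Real.exp (-(1/2 : ℝ)
            * (y ⬝ᵥ (A *ᵥ y) + 2 * (d ⬝ᵥ (A *ᵥ y)) + d ⬝ᵥ (A *ᵥ d)))) := by ring
  -- uniform bound for F' on the ball
  set bound : (Fin n → ℝ) → ℝ := fun y =>
    Real.exp (a/2) * Real.exp (-ε * ‖y‖ ^ 2 + (a + 2 * ε * B) * ‖y‖)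
      + (M₂ * c₀) * Real.exp (-(lam/2) * ‖y‖ ^ 2 + 0 * ‖y‖) with hbound_def
  have hbound_int : Integrable bound := by
    exact ((PriceAux.integrable_exp_quad ε hε _).const_mul _).add
      ((PriceAux.integrable_exp_quad (lam/2) (by linarith) 0).const_mul _)
  have h_bound : ∀ (y : Fin n → ℝ), ∀ m ∈ Metric.ball μ 1, ‖F' m y‖ ≤ bound y := by
    intro y m hm
    have hd1 : ‖m - μ‖ ≤ 1 := by
      rw [Metric.mem_ball, dist_eq_norm] at hm; exact hm.le
    have hmB : ‖m‖ ≤ B := by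
      have := norm_add_le μ (m - μ)
      simp only [add_sub_cancel] at this
      rw [hB_def]; linarith
    have hF'norm : ‖F' m y‖ = φ y * ‖fderiv ℝ f (y + m)‖ := by
      show ‖φ y • fderiv ℝ f (y + m)‖ = _
      rw [norm_smul, Real.norm_eq_abs, abs_of_pos (hφ_pos y)]
    rw [hF'norm]
    have hterm1 : 0 ≤ Real.exp (a/2) * Real.exp (-ε * ‖y‖ ^ 2 + (a + 2 * ε * B) * ‖y‖) := by
      positivity
    have hterm2 : 0 ≤ (M₂ * c₀) * Real.exp (-(lam/2) * ‖y‖ ^ 2 + 0 * ‖y‖) := by positivity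
    rcases le_or_gt ‖y + m‖ R with hcase | hcase
    · -- compact case
      have hb1 : φ y * ‖fderiv ℝ f (y + m)‖ ≤ φ y * M₂ :=
        mul_le_mul_of_nonneg_left (hM₂ _ hcase) (hφ_pos y).le
      have hb2 : φ y * M₂ ≤ (M₂ * c₀) * Real.exp (-(lam/2) * ‖y‖ ^ 2 + 0 * ‖y‖) := by
        have := hφ_le y
        calc φ y * M₂ ≤ (c₀ * Real.exp (-(lam/2) * ‖y‖ ^ 2 + 0 * ‖y‖)) * M₂ :=
              mul_le_mul_of_nonneg_right this hM₂0
          _ = (M₂ * c₀) * Real.exp (-(lam/2) * ‖y‖ ^ 2 + 0 * ‖y‖) := by ring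
      rw [hbound_def]
      dsimp only
      linarith
    · -- decay case
      have hRc : R₂ < ‖y + m‖ := lt_of_le_of_lt (le_max_right R₁ R₂) hcase
      have hdec := hR₂ (y + m) hRc
      have hdec' : gaussianDensity μ S (y + m) * ‖fderiv ℝ f (y + m)‖
          ≤ Real.exp (-ε * ‖y + m‖ ^ 2) := by
        have h0 : 0 ≤ gaussianDensity μ S (y + m) * ‖fderiv ℝ f (y + m)‖ :=
          mul_nonneg (hgd_pos μ _).le (norm_nonneg _)
        have h9 := hdec
        rwa [abs_of_nonneg h0] at h9
      have hstep : φ y * ‖fderiv ℝ f (y + m)‖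
          ≤ Real.exp (a/2 + a * ‖y‖) * Real.exp (-ε * ‖y + m‖ ^ 2) := by
        calc φ y * ‖fderiv ℝ f (y + m)‖
            ≤ (Real.exp (a/2 + a * ‖y‖) * gaussianDensity μ S (y + m))
                * ‖fderiv ℝ f (y + m)‖ :=
              mul_le_mul_of_nonneg_right (hratio m y hd1) (norm_nonneg _)
          _ = Real.exp (a/2 + a * ‖y‖)
                * (gaussianDensity μ S (y + m) * ‖fderiv ℝ f (y + m)‖) := by ring
          _ ≤ Real.exp (a/2 + a * ‖y‖) * Real.exp (-ε * ‖y + m‖ ^ 2) :=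
              mul_le_mul_of_nonneg_left hdec' (Real.exp_pos _).le
      have hfinal : Real.exp (a/2 + a * ‖y‖) * Real.exp (-ε * ‖y + m‖ ^ 2)
          ≤ Real.exp (a/2) * Real.exp (-ε * ‖y‖ ^ 2 + (a + 2 * ε * B) * ‖y‖) := by
        rw [← Real.exp_add, ← Real.exp_add]
        refine Real.exp_le_exp.2 ?_
        have h8 := hnorm_sq m y hmB
        calc a / 2 + a * ‖y‖ + -ε * ‖y + m‖ ^ 2
            ≤ a / 2 + a * ‖y‖ + (-ε * ‖y‖ ^ 2 + 2 * ε * B * ‖y‖) :=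
              add_le_add_right h8 _
          _ = a / 2 + (-ε * ‖y‖ ^ 2 + (a + 2 * ε * B) * ‖y‖) := by ring
      rw [hbound_def]
      dsimp only
      linarith
  -- Integrability of F μ
  have hFμ_int : Integrable (F μ) := by
    set bnd1 : (Fin n → ℝ) → ℝ := fun y =>
      Real.exp (-ε * ‖y‖ ^ 2 + 2 * ε * B * ‖y‖)
        + (M₁ * c₀) * Real.exp (-(lam/2) * ‖y‖ ^ 2 + 0 * ‖y‖) with hbnd1_def
    have hbnd1_int : Integrable bnd1 :=
      (PriceAux.integrable_exp_quad ε hε _).add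
        ((PriceAux.integrable_exp_quad (lam/2) (by linarith) 0).const_mul _)
    have hcont : Continuous (F μ) :=
      (hf.continuous.comp (continuous_id.add continuous_const)).mul hφ_cont
    refine hbnd1_int.mono' hcont.aestronglyMeasurable
      (Filter.Eventually.of_forall fun y => ?_)
    have hFval : ‖F μ y‖ = |f (y + μ)| * φ y := by
      show ‖f (y + μ) * φ y‖ = _
      rw [Real.norm_eq_abs, abs_mul, abs_of_pos (hφ_pos y)]
    rw [hFval]
    have hμB : ‖μ‖ ≤ B := by rw [hB_def]; linarith
    have hterm1 : (0:ℝ) ≤ Real.exp (-ε * ‖y‖ ^ 2 + 2 * ε * B * ‖y‖) := (Real.exp_pos _).le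
    have hterm2 : (0:ℝ) ≤ (M₁ * c₀) * Real.exp (-(lam/2) * ‖y‖ ^ 2 + 0 * ‖y‖) := by positivity
    rcases le_or_gt ‖y + μ‖ R with hcase | hcase
    · have hb1 : |f (y + μ)| * φ y ≤ M₁ * φ y :=
        mul_le_mul_of_nonneg_right (hM₁ _ hcase) (hφ_pos y).le
      have hb2 : M₁ * φ y ≤ (M₁ * c₀) * Real.exp (-(lam/2) * ‖y‖ ^ 2 + 0 * ‖y‖) := by
        calc M₁ * φ y ≤ M₁ * (c₀ * Real.exp (-(lam/2) * ‖y‖ ^ 2 + 0 * ‖y‖)) :=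
              mul_le_mul_of_nonneg_left (hφ_le y) hM₁0
          _ = (M₁ * c₀) * Real.exp (-(lam/2) * ‖y‖ ^ 2 + 0 * ‖y‖) := by ring
      rw [hbnd1_def]; dsimp only; linarith
    · have hRc : R₁ < ‖y + μ‖ := lt_of_le_of_lt (le_max_left R₁ R₂) hcase
      have hdec := hR₁ (y + μ) hRc
      have h0 : 0 ≤ gaussianDensity μ S (y + μ) * |f (y + μ)| :=
        mul_nonneg (hgd_pos μ _).le (abs_nonneg _)
      have hdec' : gaussianDensity μ S (y + μ) * |f (y + μ)| ≤ Real.exp (-ε * ‖y + μ‖ ^ 2) := by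
        have h9 := hdec
        rwa [abs_of_nonneg h0] at h9
      have hkey : |f (y + μ)| * φ y ≤ Real.exp (-ε * ‖y + μ‖ ^ 2) := by
        have hφy : φ y = gaussianDensity μ S (y + μ) := (hshift' y).symm
        rw [hφy, mul_comm]
        exact hdec'
      have hexp2 : Real.exp (-ε * ‖y + μ‖ ^ 2)
          ≤ Real.exp (-ε * ‖y‖ ^ 2 + 2 * ε * B * ‖y‖) :=
        Real.exp_le_exp.2 (by have := hnorm_sq μ y hμB; linarith)
      rw [hbnd1_def]; dsimp only; linarith
  -- Measurability of F' μ
  have hF'cont : Continuous (F' μ) := by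
    rw [hF'_def]
    exact hφ_cont.smul (hDfc.comp (continuous_id.add continuous_const))
  -- Integrability of F' μ
  have hF'μ_int : Integrable (F' μ) := by
    refine hbound_int.mono' hF'cont.aestronglyMeasurable
      (Filter.Eventually.of_forall fun y => ?_)
    exact h_bound y μ (Metric.mem_ball_self one_pos)
  -- differentiability of F in m
  have h_diff : ∀ (y : Fin n → ℝ), ∀ m : Fin n → ℝ, HasFDerivAt (F · y) (F' m y) m := by
    intro y m
    have hg : HasFDerivAt (fun m : Fin n → ℝ => y + m)
        (ContinuousLinearMap.id ℝ (Fin n → ℝ)) m := (hasFDerivAt_id m).const_add y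
    have hcomp : HasFDerivAt (fun m : Fin n → ℝ => f (y + m))
        ((fderiv ℝ f (y + m)).comp (ContinuousLinearMap.id ℝ (Fin n → ℝ))) m :=
      ((hf.differentiable one_ne_zero (y + m)).hasFDerivAt).comp m hg
    rw [ContinuousLinearMap.comp_id] at hcomp
    exact hcomp.mul_const (φ y)
  -- main application
  have hmain : HasFDerivAt (fun m => ∫ y, F m y) (∫ y, F' μ y) μ := by
    refine hasFDerivAt_integral_of_dominated_of_fderiv_le (Metric.ball_mem_nhds μ one_pos)
      (Filter.Eventually.of_forall fun m => ?_) hFμ_int hF'cont.aestronglyMeasurable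
      (Filter.Eventually.of_forall fun y => fun m hm => h_bound y m hm) hbound_int
      (Filter.Eventually.of_forall fun y => fun m _ => h_diff y m)
    exact ((hf.continuous.comp (continuous_id.add continuous_const)).mul
      hφ_cont).aestronglyMeasurable
  -- rewrite the integral as the original one
  have hfun_eq : (fun m => ∫ x : Fin n → ℝ, f x * gaussianDensity m S x)
      = fun m => ∫ y, F m y := by
    funext m
    rw [← integral_add_right_eq_self (fun x => f x * gaussianDensity m S x) m]
    congr 1
    funext y
    rw [hshift m y]
  refine ⟨∫ y, F' μ y, by rw [hfun_eq]; exact hmain, fun h => ?_⟩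
  rw [ContinuousLinearMap.integral_apply hF'μ_int]
  rw [← integral_add_right_eq_self (fun x => fderiv ℝ f x h * gaussianDensity μ S x) μ]
  congr 1
  funext y
  rw [hshift μ y, hF'_def]
  simp [mul_comm, hφ_def]
end

section
/- Lower bound for the quadratic-exponential moment: for Π, Σ positive definite symmetric and μ ∈ ℝⁿ, exp(−(1/2)μᵀΨμ)/√(det(Iₙ + ΣΠ)) ≥ 1 − (1/2)(μᵀΠμ + trace(ΣΠ)), where Ψ = (Π⁻¹ + Σ)⁻¹. -/
open Matrix

lemma aux_det_one_add {n : ℕ} {A : Matrix (Fin n) (Fin n) ℝ} (hA : A.PosSemidef) :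
    1 ≤ (1 + A).det ∧ (1 + A).det ≤ Real.exp A.trace := by
  have hspec : A = (hA.1.eigenvectorUnitary : Matrix (Fin n) (Fin n) ℝ) *
      diagonal (RCLike.ofReal ∘ hA.1.eigenvalues) *
      star (hA.1.eigenvectorUnitary : Matrix (Fin n) (Fin n) ℝ) := hA.1.spectral_theorem
  set U := (hA.1.eigenvectorUnitary : Matrix (Fin n) (Fin n) ℝ) with hUdef
  set d := hA.1.eigenvalues with hddef
  have hD : (diagonal (RCLike.ofReal ∘ d) : Matrix (Fin n) (Fin n) ℝ) = diagonal d := by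
    congr 1
  have hU1 : U * star U = 1 := (Matrix.mem_unitaryGroup_iff).mp hA.1.eigenvectorUnitary.2
  have hU2 : star U * U = 1 := (Matrix.mem_unitaryGroup_iff').mp hA.1.eigenvectorUnitary.2
  have h1A : 1 + A = U * (1 + diagonal d) * star U := by
    rw [Matrix.mul_add, Matrix.mul_one, Matrix.add_mul, hU1, ← hD, ← hspec]
  have hdet : (1 + A).det = ∏ i, (1 + d i) := by
    rw [h1A, det_mul_right_comm, hU1, one_mul, ← diagonal_one, diagonal_add, det_diagonal]
  have htr : A.trace = ∑ i, d i := by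
    rw [hspec, trace_mul_cycle, hU2, one_mul, hD, trace_diagonal]
  have hd0 : ∀ i, 0 ≤ d i := fun i => hA.eigenvalues_nonneg i
  constructor
  · rw [hdet]
    calc (1:ℝ) = ∏ _i : Fin n, (1:ℝ) := by simp
      _ ≤ ∏ i, (1 + d i) :=
        Finset.prod_le_prod (fun i _ => by norm_num) (fun i _ => by linarith [hd0 i])
  · rw [hdet, htr, Real.exp_sum]
    exact Finset.prod_le_prod (fun i _ => by linarith [hd0 i])
      (fun i _ => by linarith [Real.add_one_le_exp (d i)])

/-- Lower bound for the quadratic-exponential Gaussian moment: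
`exp(-(1/2)μᵀΨμ)/sqrt(det(I + ΣΠ)) ≥ 1 - (1/2)(μᵀΠμ + trace(ΣΠ))`, `Ψ = (Π⁻¹+Σ)⁻¹`. -/
theorem quadratic_exponential_lower_bound {n : ℕ} (μ : Fin n → ℝ)
    (S P : Matrix (Fin n) (Fin n) ℝ) (hS : S.PosDef) (hP : P.PosDef) :
    Real.exp (-(1 / 2 : ℝ) * (μ ⬝ᵥ ((P⁻¹ + S)⁻¹ *ᵥ μ))) / Real.sqrt ((1 + S * P).det) ≥
      1 - (1 / 2 : ℝ) * (μ ⬝ᵥ (P *ᵥ μ) + Matrix.trace (S * P)) := by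
  classical
  have hSinv : S⁻¹.PosDef := hS.inv
  have hR : ((S⁻¹ + P)⁻¹ : Matrix (Fin n) (Fin n) ℝ).PosDef := (hSinv.add hP).inv
  set R := ((S⁻¹ + P)⁻¹ : Matrix (Fin n) (Fin n) ℝ) with hRdef
  have h1 : P⁻¹ * P = 1 := Matrix.nonsing_inv_mul P hP.det_pos.ne'.isUnit
  have h2 : (S⁻¹ + P) * R = 1 := Matrix.mul_nonsing_inv _ (hSinv.add hP).det_pos.ne'.isUnit
  have h3 : S * S⁻¹ = 1 := Matrix.mul_nonsing_inv S hS.det_pos.ne'.isUnit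
  have h4 : (1 + S * P) * R = S := by
    have e : (1 : Matrix (Fin n) (Fin n) ℝ) + S * P = S * (S⁻¹ + P) := by
      rw [Matrix.mul_add, h3]
    rw [e, mul_assoc, h2, mul_one]
  have hQP : (P⁻¹ + S) * P = 1 + S * P := by rw [Matrix.add_mul, h1]
  have key : (P⁻¹ + S) * (P - P * (R * P)) = 1 := by
    rw [Matrix.mul_sub, hQP, ← mul_assoc, hQP, ← mul_assoc, h4, add_sub_cancel_right]
  have hΨ : (P⁻¹ + S)⁻¹ = P - P * (R * P) := Matrix.inv_eq_right_inv key
  -- quadratic form bound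
  have hPRP : (P * R * Pᴴ).PosSemidef := hR.posSemidef.mul_mul_conjTranspose_same P
  rw [hP.1.eq] at hPRP
  have hq : μ ⬝ᵥ ((P⁻¹ + S)⁻¹ *ᵥ μ) ≤ μ ⬝ᵥ (P *ᵥ μ) := by
    have h0 : 0 ≤ μ ⬝ᵥ ((P * R * P) *ᵥ μ) := by
      have := hPRP.dotProduct_mulVec_nonneg μ
      simpa using this
    rw [mul_assoc] at h0
    rw [hΨ, sub_mulVec, dotProduct_sub]
    linarith
  -- determinant bound
  set B := (open MatrixOrder in CFC.sqrt S) with hBdef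
  have hBB : B * B = S := by open MatrixOrder in exact CFC.sqrt_mul_sqrt_self S hS.posSemidef.nonneg
  have hBH : Bᴴ = B := by open MatrixOrder in exact (CFC.sqrt_nonneg S).posSemidef.1.eq
  have hM : (B * P * B).PosSemidef := by
    have := hP.posSemidef.mul_mul_conjTranspose_same B
    rwa [hBH] at this
  have hdet_eq : (1 + S * P).det = (1 + B * P * B).det := by
    rw [← hBB, mul_assoc, Matrix.det_one_add_mul_comm]
  have htr_eq : (B * P * B).trace = (S * P).trace := by
    rw [trace_mul_cycle, hBB]
  obtain ⟨hd1, hd2⟩ := aux_det_one_add hM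
  rw [htr_eq] at hd2
  rw [← hdet_eq] at hd1 hd2
  -- assemble
  set q := μ ⬝ᵥ ((P⁻¹ + S)⁻¹ *ᵥ μ) with hqdef
  set p := μ ⬝ᵥ (P *ᵥ μ) with hpdef
  set t := (S * P).trace with htdef
  set dd := (1 + S * P).det with hdddef
  have hs1 : 1 ≤ Real.sqrt dd := by
    rw [show (1 : ℝ) = Real.sqrt 1 by simp]
    exact Real.sqrt_le_sqrt hd1
  have hs2 : Real.sqrt dd ≤ Real.exp (t / 2) := by
    rw [Real.exp_half]
    exact Real.sqrt_le_sqrt hd2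
  have e1 : Real.exp (-(1 / 2 : ℝ) * q - t / 2) ≤ Real.exp (-(1 / 2 : ℝ) * q) / Real.sqrt dd := by
    rw [Real.exp_sub]
    gcongr
  have e2 : Real.exp (-(1 / 2 : ℝ) * p - t / 2) ≤ Real.exp (-(1 / 2 : ℝ) * q - t / 2) :=
    Real.exp_le_exp.mpr (by linarith)
  have e3 := Real.add_one_le_exp (-(1 / 2 : ℝ) * p - t / 2)
  have := le_trans (le_trans (by linarith : 1 - (1 / 2 : ℝ) * (p + t) ≤
    Real.exp (-(1 / 2 : ℝ) * p - t / 2)) e2) e1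
  exact this
end
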